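/- arXiv:1307.4670 — 4 statements merged into one kernel-verified Lean document; each statement's English description precedes it below -/
import Mathlib

section
/- Let G be a finite simple graph with n vertices and e edges. For any 0 < m < n, there exists a vertex subset U with |U| = m such that |∂(U, Ū)| ≥ 2em(n−m)/(n(n−1)), and there exists a vertex subset U′ with |U′| = m such that |∂(U′, Ū′)| ≤ 2em(n−m)/(n(n−1)). -/
open Finset

/-- The number of edges of `G` with one endpoint in `U` and the other outside `U`. -/
def edgeBoundary {n : ℕ} (G : SimpleGraph (Fin n)) [DecidableRel G.Adj]
    (U : Finset (Fin n)) : ℕ :=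
  ((Finset.univ : Finset (Fin n × Fin n)).filter
    (fun p => p.1 ∈ U ∧ p.2 ∉ U ∧ G.Adj p.1 p.2)).card

lemma count_aux {n : ℕ} (m : ℕ) (hm : 0 < m) (a b : Fin n) (hab : a ≠ b) :
    (((univ : Finset (Fin n)).powersetCard m).filter
      (fun U => a ∈ U ∧ b ∉ U)).card = (n - 2).choose (m - 1) := by
  classical
  have hb : b ∈ (univ : Finset (Fin n)).erase a := by
    simp [Ne.symm hab]
  have hcard : (((univ : Finset (Fin n)).erase a).erase b).card = n - 2 := by
    rw [Finset.card_erase_of_mem hb, Finset.card_erase_of_mem (Finset.mem_univ a)]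
    simp only [Finset.card_univ, Fintype.card_fin]
    omega
  have key : (((univ : Finset (Fin n)).powersetCard m).filter
      (fun U => a ∈ U ∧ b ∉ U)).card =
      ((((univ : Finset (Fin n)).erase a).erase b).powersetCard (m - 1)).card := by
    apply Finset.card_nbij' (fun U => U.erase a) (fun V => insert a V)
    · intro U hU
      simp only [Finset.mem_coe, Finset.mem_filter, Finset.mem_powersetCard] at hU
      obtain ⟨⟨_, hUc⟩, haU, hbU⟩ := hU
      rw [Finset.mem_coe, Finset.mem_powersetCard]
      constructor
      · intro x hx
        rw [Finset.mem_erase] at hx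
        rw [Finset.mem_erase, Finset.mem_erase]
        exact ⟨fun h => hbU (h ▸ hx.2), hx.1, Finset.mem_univ x⟩
      · rw [Finset.card_erase_of_mem haU, hUc]
    · intro V hV
      rw [Finset.mem_coe, Finset.mem_powersetCard] at hV
      obtain ⟨hVs, hVc⟩ := hV
      have haV : a ∉ V := by
        intro h
        have := hVs h
        simp at this
      have hbV : b ∉ V := by
        intro h
        have := hVs h
        simp at this
      simp only [Finset.mem_coe, Finset.mem_filter, Finset.mem_powersetCard]
      refine ⟨⟨Finset.subset_univ _, ?_⟩, Finset.mem_insert_self a V, ?_⟩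
      · rw [Finset.card_insert_of_notMem haV, hVc]; omega
      · rw [Finset.mem_insert]
        push_neg
        exact ⟨Ne.symm hab, hbV⟩
    · intro U hU
      simp only [Finset.mem_coe, Finset.mem_filter] at hU
      exact Finset.insert_erase hU.2.1
    · intro V hV
      rw [Finset.mem_coe, Finset.mem_powersetCard] at hV
      have haV : a ∉ V := by
        intro h
        have := hV.1 h
        simp at this
      exact Finset.erase_insert haV
  rw [key, Finset.card_powersetCard, hcard]

lemma choose_key (n m : ℕ) (h0 : 0 < m) (h1 : m < n) :
    m * (n - m) * n.choose m = n * (n - 1) * (n - 2).choose (m - 1) := by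
  obtain ⟨j, rfl⟩ : ∃ j, m = j + 1 := ⟨m - 1, by omega⟩
  obtain ⟨k, rfl⟩ : ∃ k, n = k + 2 := ⟨n - 2, by omega⟩
  have hj : j ≤ k := by omega
  simp only [Nat.add_sub_cancel]
  have hsub : k + 2 - (j + 1) = k + 1 - j := by omega
  rw [hsub]
  have A := Nat.add_one_mul_choose_eq k j
  have B := Nat.add_one_mul_choose_eq (k + 1) j
  have C := Nat.choose_succ_right_eq (k + 1) j
  have hsub3 : k + 1 - j = (k + 1) - j := rfl
  calc (j + 1) * (k + 1 - j) * (k + 2).choose (j + 1)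
      = (k + 1 - j) * ((k + 2).choose (j + 1) * (j + 1)) := by ring
    _ = (k + 1 - j) * ((k + 2) * (k + 1).choose j) := by
        rw [show (k+2) * (k+1).choose j = (k + 1 + 1) * (k+1).choose j from rfl, B]
    _ = (k + 2) * ((k + 1).choose j * (k + 1 - j)) := by ring
    _ = (k + 2) * ((k + 1).choose (j + 1) * (j + 1)) := by rw [C]
    _ = (k + 2) * ((k + 1) * k.choose j) := by
        rw [show (k+1) * k.choose j = (k + 1) * k.choose j from rfl, A]
    _ = (k + 2) * (k + 1) * k.choose j := by ring

/-- Averaging: for every `0 < m < n` there are `m`-sets `U`, `U'` with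
`|∂(U,Ū)| ≥ 2em(n-m)/(n(n-1))` and `|∂(U',Ū')| ≤ 2em(n-m)/(n(n-1))`. -/
theorem stmt13 (n : ℕ) (G : SimpleGraph (Fin n)) [DecidableRel G.Adj]
    (e : ℕ) (he : e = G.edgeFinset.card)
    (m : ℕ) (hm0 : 0 < m) (hmn : m < n) :
    (∃ U : Finset (Fin n), U.card = m ∧
      2 * (e : ℝ) * m * ((n : ℝ) - m) / ((n : ℝ) * ((n : ℝ) - 1)) ≤
        (edgeBoundary G U : ℝ)) ∧
    (∃ U' : Finset (Fin n), U'.card = m ∧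
      (edgeBoundary G U' : ℝ) ≤
        2 * (e : ℝ) * m * ((n : ℝ) - m) / ((n : ℝ) * ((n : ℝ) - 1))) := by
  classical
  set S := (univ : Finset (Fin n)).powersetCard m with hS
  have hSne : S.Nonempty := Finset.powersetCard_nonempty.2 (by simp; omega)
  -- key sum
  have hsum : ∑ U ∈ S, edgeBoundary G U = 2 * e * (n - 2).choose (m - 1) := by
    have hstep0 : ∀ U ∈ S, edgeBoundary G U =
        ∑ p ∈ (univ : Finset (Fin n × Fin n)),
          if p.1 ∈ U ∧ p.2 ∉ U ∧ G.Adj p.1 p.2 then 1 else 0 := by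
      intro U _
      rw [edgeBoundary, Finset.card_filter]
    rw [Finset.sum_congr rfl hstep0, Finset.sum_comm]
    have step : ∀ p ∈ (univ : Finset (Fin n × Fin n)),
        (∑ U ∈ S, if p.1 ∈ U ∧ p.2 ∉ U ∧ G.Adj p.1 p.2 then 1 else 0) =
        if G.Adj p.1 p.2 then (n - 2).choose (m - 1) else 0 := by
      intro p _
      by_cases hA : G.Adj p.1 p.2
      · simp only [hA, and_true, if_true]
        rw [← Finset.card_filter, hS]
        exact count_aux m hm0 p.1 p.2 hA.ne
      · simp [hA]
    rw [Finset.sum_congr rfl step, ← Finset.sum_filter, Finset.sum_const, smul_eq_mul]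
    rw [he]
    rw [G.two_mul_card_edgeFinset]
  -- average value identity
  have hn1 : (1 : ℝ) ≤ (n : ℝ) := by exact_mod_cast Nat.one_le_iff_ne_zero.2 (by omega)
  have hnpos : (0 : ℝ) < (n : ℝ) * ((n : ℝ) - 1) := by
    have h2 : (2 : ℝ) ≤ (n : ℝ) := by exact_mod_cast (by omega : 2 ≤ n)
    nlinarith
  set t : ℝ := 2 * (e : ℝ) * m * ((n : ℝ) - m) / ((n : ℝ) * ((n : ℝ) - 1)) with ht
  have hcardS : S.card = n.choose m := by
    rw [hS, Finset.card_powersetCard, Finset.card_univ, Fintype.card_fin]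
  have hkey := choose_key n m hm0 hmn
  have hid : (S.card : ℝ) * t = 2 * e * ((n - 2).choose (m - 1) : ℝ) := by
    rw [ht, hcardS]
    rw [mul_div_assoc']
    rw [div_eq_iff (ne_of_gt hnpos)]
    have hcast : ((n : ℝ) - m) = ((n - m : ℕ) : ℝ) := by
      push_cast [Nat.cast_sub hmn.le]; ring
    have hcast2 : ((n : ℝ) - 1) = ((n - 1 : ℕ) : ℝ) := by
      push_cast [Nat.cast_sub (by omega : 1 ≤ n)]; ring
    rw [hcast, hcast2]
    have := congrArg (fun x : ℕ => (x : ℝ)) hkey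
    push_cast at this ⊢
    nlinarith [this]
  have hsumR : ∑ U ∈ S, (edgeBoundary G U : ℝ) = (S.card : ℝ) * t := by
    rw [hid]
    rw [← Nat.cast_sum]
    rw [hsum]
    push_cast
    ring
  constructor
  · have h1 : ∑ U ∈ S, t ≤ ∑ U ∈ S, (edgeBoundary G U : ℝ) := by
      rw [Finset.sum_const, nsmul_eq_mul, hsumR]
    obtain ⟨U, hU, hle⟩ := Finset.exists_le_of_sum_le hSne h1
    exact ⟨U, (Finset.mem_powersetCard_univ.1 hU), hle⟩
  · have h1 : ∑ U ∈ S, (edgeBoundary G U : ℝ) ≤ ∑ U ∈ S, t := by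
      rw [Finset.sum_const, nsmul_eq_mul, hsumR]
    obtain ⟨U, hU, hle⟩ := Finset.exists_le_of_sum_le hSne h1
    exact ⟨U, (Finset.mem_powersetCard_univ.1 hU), hle⟩
end

section
/- Let G be a connected finite simple graph on n vertices with e edges and Laplacian eigenvalues λ₁ ≥ ⋯ ≥ λₙ. For each 0 < m < n there exists a vertex set U of size m such that λ₁ + ⋯ + λₘ ≥ (∑_{u∈U} d_u) + 2em/(n(n−1)). -/
open Finset

lemma stmt14_aux2 (n a b : ℕ) (hb : b ≤ n) :
    (Finset.filter (fun i : Fin n => a ≤ (i:ℕ) ∧ (i:ℕ) < b) Finset.univ).card = b - a := by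
  rw [← Finset.card_image_of_injective _ Fin.val_injective]
  have h : (Finset.filter (fun i : Fin n => a ≤ (i:ℕ) ∧ (i:ℕ) < b) Finset.univ).image Fin.val
      = Finset.Ico a b := by
    ext k
    simp only [Finset.mem_image, Finset.mem_filter, Finset.mem_univ, true_and, Finset.mem_Ico]
    constructor
    · rintro ⟨i, hi, rfl⟩; exact hi
    · intro hk; exact ⟨⟨k, lt_of_lt_of_le hk.2 hb⟩, hk, rfl⟩
  rw [h, Nat.card_Ico]

lemma stmt14_aux1 (n b : ℕ) (hb : b ≤ n) :
    (Finset.filter (fun i : Fin n => (i:ℕ) < b) Finset.univ).card = b := by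
  have := stmt14_aux2 n 0 b hb
  simpa using this


/-- For each `0 < m < n` there is a vertex set `U` of size `m` with
`∑_{i≤m} λᵢ ≥ ∑_{u∈U} d_u + 2em/(n(n-1))`. -/
theorem stmt14 (n : ℕ) (G : SimpleGraph (Fin n)) [DecidableRel G.Adj]
    (hconn : G.Connected)
    (hL : (G.lapMatrix ℝ).IsHermitian)
    (lam : Fin n → ℝ) (σ : Equiv.Perm (Fin n))
    (hlam : lam = hL.eigenvalues ∘ σ)
    (hlamAnti : ∀ i j : Fin n, i ≤ j → lam j ≤ lam i)
    (e : ℕ) (he : e = G.edgeFinset.card)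
    (m : ℕ) (hm0 : 0 < m) (hmn : m < n) :
    ∃ U : Finset (Fin n), U.card = m ∧
      (∑ u ∈ U, (G.degree u : ℝ)) + 2 * (e : ℝ) * m / ((n : ℝ) * ((n : ℝ) - 1)) ≤
        ∑ i ∈ Finset.filter (fun i : Fin n => (i : ℕ) < m) Finset.univ, lam i := by
  classical
  have hn2 : 2 ≤ n := by omega
  set f : Fin n → ℕ := fun v => G.degree v with hf
  set τ : Equiv.Perm (Fin n) := Tuple.sort f with hτ
  set A : Finset (Fin n) := Finset.filter (fun i : Fin n => (i:ℕ) < m) Finset.univ with hA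
  set U : Finset (Fin n) := A.image τ with hU
  have hAcard : A.card = m := stmt14_aux1 n m hmn.le
  have hUcard : U.card = m := by
    rw [hU, Finset.card_image_of_injective _ τ.injective, hAcard]
  refine ⟨U, hUcard, ?_⟩
  -- degrees real function
  set d : Fin n → ℝ := fun v => (G.degree v : ℝ) with hd
  -- pairwise comparison
  have hUle : ∀ u ∈ U, ∀ v ∈ Uᶜ, d u ≤ d v := by
    intro u hu v hv
    obtain ⟨i, hi, rfl⟩ := Finset.mem_image.mp hu
    have him : (i:ℕ) < m := (Finset.mem_filter.mp hi).2
    have hjm : ¬ ((τ.symm v : ℕ) < m) := by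
      intro h
      have : v ∈ U := Finset.mem_image.mpr ⟨τ.symm v,
        Finset.mem_filter.mpr ⟨Finset.mem_univ _, h⟩, τ.apply_symm_apply v⟩
      exact (Finset.mem_compl.mp hv) this
    have hij : i ≤ τ.symm v := by rw [Fin.le_def]; omega
    have := Tuple.monotone_sort f hij
    simp only [Function.comp_apply] at this
    rw [← hτ] at this
    rw [τ.apply_symm_apply] at this
    simp only [hd]
    exact_mod_cast this
  -- degree sum bound : n * D ≤ 2 e m
  set D : ℝ := ∑ u ∈ U, d u with hD
  set C : ℝ := ∑ v ∈ Uᶜ, d v with hC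
  have htotal : D + C = 2 * e := by
    rw [hD, hC, Finset.sum_add_sum_compl]
    have h2 := G.sum_degrees_eq_twice_card_edges
    rw [he]
    simp only [hd]
    rw [← Nat.cast_sum, h2]
    push_cast
    ring
  have hUccard : (Uᶜ).card = n - m := by
    rw [Finset.card_compl, hUcard, Fintype.card_fin]
  have hkey : ((n:ℝ) - m) * D ≤ (m:ℝ) * C := by
    have h1 : ∑ u ∈ U, ∑ _v ∈ Uᶜ, d u ≤ ∑ u ∈ U, ∑ v ∈ Uᶜ, d v :=
      Finset.sum_le_sum fun u hu => Finset.sum_le_sum fun v hv => hUle u hu v hv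
    have hL1 : ∑ u ∈ U, ∑ _v ∈ Uᶜ, d u = ((n:ℝ) - m) * D := by
      simp only [Finset.sum_const, nsmul_eq_mul, hUccard]
      rw [hD, Finset.mul_sum]
      push_cast [Nat.cast_sub hmn.le]
      ring
    have hR1 : ∑ _u ∈ U, ∑ v ∈ Uᶜ, d v = (m:ℝ) * C := by
      simp only [Finset.sum_const, nsmul_eq_mul, hUcard, hC]
    rw [hL1] at h1
    rw [hR1] at h1
    exact h1
  have hDle : (n:ℝ) * D ≤ 2 * e * m := by
    have : (n:ℝ) * D = ((n:ℝ) - m) * D + m * D := by ring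
    calc (n:ℝ) * D = ((n:ℝ) - m) * D + m * D := by ring
      _ ≤ m * C + m * D := by linarith
      _ = m * (D + C) := by ring
      _ = 2 * e * m := by rw [htotal]; ring
  -- eigenvalue total
  have htrace1 : (G.lapMatrix ℝ).trace = ∑ i, hL.eigenvalues i := by
    nth_rewrite 1 [hL.spectral_theorem]
    rw [Unitary.conjStarAlgAut_apply]
    rw [Matrix.trace_mul_cycle]
    rw [(Matrix.mem_unitaryGroup_iff').mp hL.eigenvectorUnitary.2, one_mul, Matrix.trace_diagonal]
    simp
  have htrace2 : (G.lapMatrix ℝ).trace = ∑ v, d v := by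
    simp [Matrix.trace, Matrix.diag, SimpleGraph.lapMatrix, SimpleGraph.degMatrix, hd]
  have hT : ∑ i, lam i = 2 * e := by
    rw [hlam]
    have h3 : ∑ i, (hL.eigenvalues ∘ σ) i = ∑ i, hL.eigenvalues i := by
      simp only [Function.comp_apply]
      exact Equiv.sum_comp σ hL.eigenvalues
    rw [h3, ← htrace1, htrace2, ← Finset.sum_add_sum_compl U (f := d), htotal]
  -- zero eigenvalue
  have hzero : ∃ j, hL.eigenvalues j = 0 := by
    have hdet : (G.lapMatrix ℝ).det = 0 := by
      by_contra hdne
      have h0 := Matrix.eq_zero_of_mulVec_eq_zero hdne (G.lapMatrix_mulVec_const_eq_zero (R := ℝ))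
      have h1 : (1:ℝ) = 0 := congrFun h0 ⟨0, by omega⟩
      norm_num at h1
    have hp := hL.det_eq_prod_eigenvalues
    rw [hdet] at hp
    obtain ⟨i, _, hi⟩ := (Finset.prod_eq_zero_iff).mp hp.symm
    exact ⟨i, by exact_mod_cast hi⟩
  set ℓ : Fin n := ⟨n - 1, by omega⟩ with hℓ
  have hlast : lam ℓ ≤ 0 := by
    obtain ⟨j, hj⟩ := hzero
    have h0 : lam (σ.symm j) = 0 := by rw [hlam]; simp [hj]
    have : ℓ ≥ σ.symm j → lam ℓ ≤ lam (σ.symm j) := hlamAnti _ _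
    refine le_trans (this ?_) h0.le
    show σ.symm j ≤ ℓ
    rw [Fin.le_def]
    simp only [hℓ]
    have := (σ.symm j).isLt
    omega
  -- split sums
  set B : Finset (Fin n) :=
    Finset.filter (fun i : Fin n => m ≤ (i:ℕ) ∧ (i:ℕ) < n - 1) Finset.univ with hB
  set S1 : ℝ := ∑ i ∈ A, lam i with hS1
  set S2 : ℝ := ∑ i ∈ B, lam i with hS2
  have hBcard : B.card = n - 1 - m := stmt14_aux2 n m (n-1) (by omega)
  have hsplit : S1 + S2 + lam ℓ = 2 * e := by
    rw [← hT]
    rw [← Finset.sum_filter_add_sum_filter_not Finset.univ (fun i : Fin n => (i:ℕ) < m) lam]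
    have hrest := Finset.sum_filter_add_sum_filter_not
      (Finset.filter (fun i : Fin n => ¬ (i:ℕ) < m) Finset.univ)
      (fun i : Fin n => (i:ℕ) < n - 1) lam
    have hBeq : (Finset.filter (fun i : Fin n => ¬ (i:ℕ) < m) Finset.univ).filter
        (fun i : Fin n => (i:ℕ) < n - 1) = B := by
      rw [hB, Finset.filter_filter]
      apply Finset.filter_congr
      intro i _
      simp only [not_lt]
    have hLeq : (Finset.filter (fun i : Fin n => ¬ (i:ℕ) < m) Finset.univ).filter
        (fun i : Fin n => ¬ (i:ℕ) < n - 1) = {ℓ} := by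
      ext i
      simp only [Finset.filter_filter, Finset.mem_filter, Finset.mem_univ, true_and,
        Finset.mem_singleton, not_lt]
      constructor
      · rintro ⟨h1, h2⟩
        have := i.isLt
        apply Fin.ext
        simp only [hℓ]
        omega
      · rintro rfl
        simp only [hℓ]
        omega
    rw [hBeq, hLeq, Finset.sum_singleton] at hrest
    rw [← hrest, hS1, hS2, hA]
    ring
  -- bounds via μ
  set μ : ℝ := lam ⟨m, hmn⟩ with hμ
  have hS1ge : (m:ℝ) * μ ≤ S1 := by
    have := Finset.card_nsmul_le_sum A lam μ (fun i hi => by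
      apply hlamAnti
      rw [Fin.le_def]
      have := (Finset.mem_filter.mp hi).2
      simpa using this.le)
    rw [hAcard, nsmul_eq_mul] at this
    exact this
  have hS2le : S2 ≤ ((n:ℝ) - 1 - m) * μ := by
    have := Finset.sum_le_card_nsmul B lam μ (fun i hi => by
      apply hlamAnti
      rw [Fin.le_def]
      exact (Finset.mem_filter.mp hi).2.1)
    rw [hBcard, nsmul_eq_mul] at this
    have hcast : ((n - 1 - m : ℕ) : ℝ) = (n:ℝ) - 1 - m := by
      push_cast [Nat.cast_sub (by omega : m ≤ n - 1), Nat.cast_sub (by omega : 1 ≤ n)]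
      ring
    rw [hcast] at this
    exact this
  -- combine: (n-1) * S1 ≥ 2 e m
  have hS1big : 2 * (e:ℝ) * m ≤ ((n:ℝ) - 1) * S1 := by
    have h1 : ((n:ℝ) - 1 - m) * S1 ≥ ((n:ℝ) - 1 - m) * ((m:ℝ) * μ) := by
      apply mul_le_mul_of_nonneg_left hS1ge
      have : (m:ℝ) ≤ (n:ℝ) - 1 := by
        have : (m:ℝ) + 1 ≤ n := by exact_mod_cast hmn
        linarith
      linarith
    have h2 : (m:ℝ) * S2 ≤ (m:ℝ) * (((n:ℝ) - 1 - m) * μ) := by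
      apply mul_le_mul_of_nonneg_left hS2le
      positivity
    have h3 : S1 + S2 ≥ 2 * e := by linarith [hsplit, hlast]
    nlinarith [h1, h2, h3]
  -- final arithmetic
  have hn0 : (0:ℝ) < n := by positivity
  have hn1 : (0:ℝ) < (n:ℝ) - 1 := by
    have : (2:ℝ) ≤ n := by exact_mod_cast hn2
    linarith
  have hDle2 : D ≤ 2 * e * m / n := by
    rw [le_div_iff₀ hn0]
    linarith [hDle]
  have hfinal : 2 * (e:ℝ) * m / n + 2 * e * m / (n * ((n:ℝ) - 1)) = 2 * e * m / ((n:ℝ) - 1) := by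
    field_simp
    ring
  have hS1ge2 : 2 * (e:ℝ) * m / ((n:ℝ) - 1) ≤ S1 := by
    rw [div_le_iff₀ hn1]
    linarith [hS1big]
  calc D + 2 * (e:ℝ) * m / ((n:ℝ) * ((n:ℝ) - 1))
      ≤ 2 * (e:ℝ) * m / n + 2 * e * m / (n * ((n:ℝ) - 1)) := by linarith [hDle2]
    _ = 2 * e * m / ((n:ℝ) - 1) := hfinal
    _ ≤ S1 := hS1ge2
end

section
/- Let G be a connected finite simple graph on n vertices with Laplacian eigenvalues λ₁ ≥ ⋯ ≥ λₙ = 0. Let D be a k-dominating set of cardinality m with 0 < m < n. Then λ₁ + ⋯ + λₘ ≥ (∑_{u∈D} d_u) + k. -/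
open Finset


lemma stmt16_card_filter (n m : ℕ) (hmn : m < n) :
    (Finset.filter (fun j : Fin n => (j : ℕ) < m) Finset.univ).card = m := by
  have : Finset.filter (fun j : Fin n => (j : ℕ) < m) Finset.univ = Finset.Iio ⟨m, hmn⟩ := by
    ext j
    simp [Fin.lt_def]
  rw [this, Fin.card_Iio]

lemma stmt16_sorted (n m : ℕ) (hmn : m < n) (lam : Fin n → ℝ)
    (hA : ∀ i j : Fin n, i ≤ j → lam j ≤ lam i) (b : Fin n → ℝ)
    (hb0 : ∀ j, 0 ≤ b j) (hb1 : ∀ j, b j ≤ 1) (hs : ∑ j, b j = (m : ℝ)) :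
    ∑ j, lam j * b j ≤ ∑ j ∈ Finset.filter (fun j : Fin n => (j : ℕ) < m) Finset.univ, lam j := by
  set c := lam ⟨m, hmn⟩ with hc
  have key : ∀ j : Fin n, lam j * b j ≤ c * b j + (if (j : ℕ) < m then lam j - c else 0) := by
    intro j
    by_cases h : (j : ℕ) < m
    · have h1 : c ≤ lam j := hA j ⟨m, hmn⟩ (by rw [Fin.le_def]; exact h.le)
      rw [if_pos h]
      nlinarith [hb1 j, hb0 j]
    · have h1 : lam j ≤ c := hA ⟨m, hmn⟩ j (by rw [Fin.le_def]; exact not_lt.mp h)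
      rw [if_neg h, add_zero]
      exact mul_le_mul_of_nonneg_right h1 (hb0 j)
  calc ∑ j, lam j * b j
      ≤ ∑ j, (c * b j + if (j : ℕ) < m then lam j - c else 0) :=
        Finset.sum_le_sum fun j _ => key j
    _ = c * (∑ j, b j) + ∑ j ∈ Finset.filter (fun j : Fin n => (j : ℕ) < m) Finset.univ, (lam j - c) := by
        rw [Finset.sum_add_distrib, Finset.mul_sum, Finset.sum_filter]
    _ = ∑ j ∈ Finset.filter (fun j : Fin n => (j : ℕ) < m) Finset.univ, lam j := by
        rw [hs, Finset.sum_sub_distrib, Finset.sum_const, stmt16_card_filter n m hmn,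
          nsmul_eq_mul]
        ring

lemma stmt16_diag_nonneg {n : ℕ} (N R : Matrix (Fin n) (Fin n) ℝ)
    (hsym : star R = R) (hidem : R * R = R) (i : Fin n) :
    0 ≤ (star N * R * N) i i := by
  have h1 : star N * R * N = star (R * N) * (R * N) := by
    rw [Matrix.star_mul, hsym]
    conv_lhs => rw [← hidem]
    simp only [Matrix.mul_assoc]
  rw [h1, Matrix.mul_apply]
  refine Finset.sum_nonneg fun x _ => ?_
  rw [Matrix.star_apply, star_trivial]
  exact mul_self_nonneg _

/-- Ky-Fan type bound: `trace (A * R) ≤` sum of the `m` largest eigenvalues of `A`,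
for `R` a symmetric idempotent with trace `m`. -/
lemma stmt16_kyfan {n : ℕ} (A : Matrix (Fin n) (Fin n) ℝ) (hA : A.IsHermitian)
    (R : Matrix (Fin n) (Fin n) ℝ) (hsym : star R = R) (hidem : R * R = R)
    (m : ℕ) (htr : R.trace = (m : ℝ)) (hmn : m < n)
    (lam : Fin n → ℝ) (σ : Equiv.Perm (Fin n)) (hlam : lam = hA.eigenvalues ∘ σ)
    (hAnti : ∀ i j : Fin n, i ≤ j → lam j ≤ lam i) :
    (A * R).trace ≤ ∑ j ∈ Finset.filter (fun j : Fin n => (j : ℕ) < m) Finset.univ, lam j := by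
  set V : Matrix (Fin n) (Fin n) ℝ := (hA.eigenvectorUnitary : Matrix (Fin n) (Fin n) ℝ) with hV
  have hVV : V * star V = 1 := (Matrix.mem_unitaryGroup_iff).mp hA.eigenvectorUnitary.2
  have hVV' : star V * V = 1 := (Matrix.mem_unitaryGroup_iff').mp hA.eigenvectorUnitary.2
  have hspec : A = V * Matrix.diagonal hA.eigenvalues * star V := by
    have h := hA.spectral_theorem
    simpa using h
  set c : Fin n → ℝ := fun i => (star V * R * V) i i with hcdef
  -- each c i ∈ [0,1]
  have hc0 : ∀ i, 0 ≤ c i := fun i => stmt16_diag_nonneg V R hsym hidem i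
  have hc1 : ∀ i, c i ≤ 1 := by
    intro i
    have h2 : star (1 - R) = 1 - R := by rw [star_sub, hsym, star_one]
    have h3 : (1 - R) * (1 - R) = 1 - R := by
      rw [sub_mul, one_mul, mul_sub, mul_one, hidem]
      abel
    have h4 := stmt16_diag_nonneg V (1 - R) h2 h3 i
    have h5 : star V * (1 - R) * V = 1 - star V * R * V := by
      rw [mul_sub, sub_mul, mul_one, hVV']
    rw [h5, Matrix.sub_apply, Matrix.one_apply_eq] at h4
    linarith
  -- sum of c = m
  have hcsum : ∑ i, c i = (m : ℝ) := by
    have : ∑ i, c i = (star V * R * V).trace := by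
      simp [Matrix.trace, Matrix.diag, hcdef]
    rw [this, Matrix.trace_mul_comm, ← Matrix.mul_assoc, hVV, one_mul, htr]
  -- trace (A * R) = ∑ eigenvalues i * c i
  have htrace : (A * R).trace = ∑ i, hA.eigenvalues i * c i := by
    calc (A * R).trace
        = (V * (Matrix.diagonal hA.eigenvalues * (star V * R))).trace := by
          conv_rhs => rw [← Matrix.mul_assoc, ← Matrix.mul_assoc, ← hspec]
      _ = ((Matrix.diagonal hA.eigenvalues * (star V * R)) * V).trace :=
          Matrix.trace_mul_comm _ _
      _ = (Matrix.diagonal hA.eigenvalues * (star V * R * V)).trace := by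
          simp only [Matrix.mul_assoc]
      _ = ∑ i, hA.eigenvalues i * c i := by
          simp [Matrix.trace, Matrix.diag, Matrix.diagonal_mul, hcdef]
  rw [htrace]
  have hreindex : ∑ i, hA.eigenvalues i * c i = ∑ j, lam j * c (σ j) := by
    rw [hlam]
    exact (Equiv.sum_comp σ fun i => hA.eigenvalues i * c i).symm
  rw [hreindex]
  refine stmt16_sorted n m hmn lam hAnti (fun j => c (σ j)) (fun j => hc0 _) (fun j => hc1 _) ?_
  rw [Equiv.sum_comp σ c, hcsum]


noncomputable def stmt16P (n : ℕ) (D : Finset (Fin n)) : Matrix (Fin n) (Fin n) ℝ :=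
  Matrix.of fun v w => (if v = w ∧ v ∈ D then (1 : ℝ) else 0) +
    (if v ∉ D ∧ w ∉ D then ((n : ℝ) - D.card)⁻¹ else 0)

noncomputable def stmt16Q (n : ℕ) : Matrix (Fin n) (Fin n) ℝ :=
  Matrix.of fun _ _ => (n : ℝ)⁻¹

variable {n : ℕ} {D : Finset (Fin n)}

lemma stmt16_compl_card : (Finset.univ.filter (fun v : Fin n => v ∉ D)).card = n - D.card := by
  have h : Finset.univ.filter (fun v : Fin n => v ∉ D) = Dᶜ := by ext v; simp
  rw [h, Finset.card_compl, Fintype.card_fin]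

lemma stmt16_sub_pos (hmn : D.card < n) : (0 : ℝ) < (n : ℝ) - D.card := by
  have := (Nat.cast_lt (α := ℝ)).mpr hmn
  linarith

lemma stmt16_compl_card_real (hmn : D.card < n) :
    ((Finset.univ.filter (fun v : Fin n => v ∉ D)).card : ℝ) = (n : ℝ) - D.card := by
  rw [stmt16_compl_card, Nat.cast_sub hmn.le]

lemma stmt16P_memD {v : Fin n} (hv : v ∈ D) (w : Fin n) :
    stmt16P n D v w = if v = w then 1 else 0 := by
  simp [stmt16P, hv]

lemma stmt16P_notMemD {v : Fin n} (hv : v ∉ D) (w : Fin n) :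
    stmt16P n D v w = if w ∈ D then 0 else ((n : ℝ) - D.card)⁻¹ := by
  by_cases hw : w ∈ D <;> simp [stmt16P, hv, hw]

lemma stmt16P_sym : star (stmt16P n D) = stmt16P n D := by
  ext v w
  rw [Matrix.star_apply, star_trivial]
  by_cases hvw : v = w
  · subst hvw; rfl
  · by_cases hv : v ∈ D <;> by_cases hw : w ∈ D <;>
      simp [stmt16P_memD, stmt16P_notMemD, hv, hw, hvw, Ne.symm hvw]

lemma stmt16P_idem (hmn : D.card < n) : stmt16P n D * stmt16P n D = stmt16P n D := by
  have hr : ((n : ℝ) - D.card) * ((n : ℝ) - D.card)⁻¹ = 1 :=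
    mul_inv_cancel₀ (ne_of_gt (stmt16_sub_pos hmn))
  ext v w
  rw [Matrix.mul_apply]
  by_cases hv : v ∈ D
  · rw [Finset.sum_congr rfl fun x (_ : x ∈ Finset.univ) =>
      (by rw [stmt16P_memD hv x, ite_mul, one_mul, zero_mul] :
        stmt16P n D v x * stmt16P n D x w = if v = x then stmt16P n D x w else 0)]
    rw [Finset.sum_ite_eq]
    simp
  · rw [Finset.sum_congr rfl fun x (_ : x ∈ Finset.univ) =>
      (by rw [stmt16P_notMemD hv x, ite_mul, zero_mul] :
        stmt16P n D v x * stmt16P n D x w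
          = if x ∈ D then 0 else ((n : ℝ) - D.card)⁻¹ * stmt16P n D x w)]
    by_cases hw : w ∈ D
    · have hz : ∀ x : Fin n,
          (if x ∈ D then (0:ℝ) else ((n : ℝ) - D.card)⁻¹ * stmt16P n D x w) = 0 := by
        intro x
        by_cases hx : x ∈ D
        · simp [hx]
        · simp [hx, stmt16P_notMemD hx, hw]
      rw [Finset.sum_congr rfl fun x _ => hz x, Finset.sum_const_zero,
        stmt16P_notMemD hv, if_pos hw]
    · have hz : ∀ x : Fin n,
          (if x ∈ D then (0:ℝ) else ((n : ℝ) - D.card)⁻¹ * stmt16P n D x w)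
            = if x ∈ D then 0 else ((n : ℝ) - D.card)⁻¹ * ((n : ℝ) - D.card)⁻¹ := by
        intro x
        by_cases hx : x ∈ D
        · simp [hx]
        · simp [hx, stmt16P_notMemD hx, hw]
      rw [Finset.sum_congr rfl fun x _ => hz x, Finset.sum_ite, Finset.sum_const,
        Finset.sum_const, smul_zero, zero_add, nsmul_eq_mul, stmt16_compl_card_real hmn,
        stmt16P_notMemD hv, if_neg hw, ← mul_assoc, hr, one_mul]

lemma stmt16P_rowsum (hmn : D.card < n) (v : Fin n) : ∑ w, stmt16P n D v w = 1 := by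
  by_cases hv : v ∈ D
  · simp [stmt16P_memD hv]
  · simp only [stmt16P_notMemD hv]
    rw [Finset.sum_ite, Finset.sum_const, Finset.sum_const, smul_zero, zero_add,
      nsmul_eq_mul, stmt16_compl_card_real hmn,
      mul_inv_cancel₀ (ne_of_gt (stmt16_sub_pos hmn))]

lemma stmt16P_trace (hmn : D.card < n) : (stmt16P n D).trace = (D.card : ℝ) + 1 := by
  have h : ∀ v : Fin n, stmt16P n D v v = if v ∈ D then 1 else ((n : ℝ) - D.card)⁻¹ := by
    intro v
    by_cases hv : v ∈ D
    · simp [stmt16P_memD hv, hv]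
    · simp [stmt16P_notMemD hv, hv]
  rw [Matrix.trace]
  simp only [Matrix.diag]
  rw [Finset.sum_congr rfl fun v _ => h v, Finset.sum_ite, Finset.sum_const, Finset.sum_const,
    nsmul_eq_mul, nsmul_eq_mul, mul_one, stmt16_compl_card_real hmn,
    mul_inv_cancel₀ (ne_of_gt (stmt16_sub_pos hmn)), Finset.filter_mem_eq_inter,
    Finset.univ_inter]

lemma stmt16Q_sym : star (stmt16Q n) = stmt16Q n := by
  ext v w; simp [stmt16Q, Matrix.star_apply]

lemma stmt16Q_trace (hn : 0 < n) : (stmt16Q n).trace = 1 := by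
  have hn' : (0:ℝ) < n := by exact_mod_cast hn
  simp [Matrix.trace, Matrix.diag, stmt16Q, Finset.sum_const, mul_inv_cancel₀ (ne_of_gt hn')]

lemma stmt16_QQ (hn : 0 < n) : stmt16Q n * stmt16Q n = stmt16Q n := by
  have hn' : (0:ℝ) < n := by exact_mod_cast hn
  ext v w
  rw [Matrix.mul_apply]
  simp [stmt16Q, Finset.sum_const, nsmul_eq_mul]
  field_simp

lemma stmt16_PQ (hmn : D.card < n) : stmt16P n D * stmt16Q n = stmt16Q n := by
  ext v w
  rw [Matrix.mul_apply]
  simp only [stmt16Q, Matrix.of_apply]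
  rw [← Finset.sum_mul, stmt16P_rowsum hmn, one_mul]

lemma stmt16_QP (hmn : D.card < n) : stmt16Q n * stmt16P n D = stmt16Q n := by
  have h := congrArg star (stmt16_PQ hmn)
  rw [Matrix.star_mul, stmt16P_sym, stmt16Q_sym] at h
  rw [← stmt16Q_sym]
  exact h.symm ▸ stmt16Q_sym

variable {n : ℕ} (G : SimpleGraph (Fin n)) [DecidableRel G.Adj]

lemma stmt16_lap_diag (v : Fin n) : (G.lapMatrix ℝ) v v = G.degree v := by
  simp [SimpleGraph.lapMatrix, SimpleGraph.degMatrix]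

lemma stmt16_lap_offdiag {v w : Fin n} (h : v ≠ w) :
    (G.lapMatrix ℝ) v w = if G.Adj v w then -1 else 0 := by
  simp [SimpleGraph.lapMatrix, SimpleGraph.degMatrix, Matrix.diagonal_apply_ne _ h]
  split_ifs <;> ring

lemma stmt16_lap_rowsum (v : Fin n) : ∑ x, (G.lapMatrix ℝ) v x = 0 := by
  have h := congrFun (G.lapMatrix_mulVec_const_eq_zero (R := ℝ)) v
  simpa [Matrix.mulVec, dotProduct] using h

lemma stmt16_traceLQ (hn : 0 < n) : (G.lapMatrix ℝ * stmt16Q n).trace = 0 := by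
  rw [Matrix.trace]
  simp only [Matrix.diag, Matrix.mul_apply, stmt16Q, Matrix.of_apply]
  rw [Finset.sum_congr rfl fun v (_ : v ∈ Finset.univ) =>
    (by rw [← Finset.sum_mul, stmt16_lap_rowsum G v, zero_mul] :
      ∑ x, (G.lapMatrix ℝ) v x * (n : ℝ)⁻¹ = 0)]
  simp

lemma stmt16_inner_sum {D : Finset (Fin n)} {v : Fin n} (hv : v ∉ D) :
    ∑ x : Fin n, (if x ∈ D then (0:ℝ) else (G.lapMatrix ℝ) v x)
      = ((D.filter (fun u => G.Adj v u)).card : ℝ) := by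
  have hsplit : ∀ x : Fin n, (if x ∈ D then (0:ℝ) else (G.lapMatrix ℝ) v x)
      = (G.lapMatrix ℝ) v x - (if x ∈ D then (G.lapMatrix ℝ) v x else 0) := by
    intro x; split_ifs <;> ring
  rw [Finset.sum_congr rfl fun x _ => hsplit x, Finset.sum_sub_distrib,
    stmt16_lap_rowsum G v, zero_sub, Finset.sum_ite_mem, Finset.univ_inter]
  have hoff : ∀ x ∈ D, (G.lapMatrix ℝ) v x = -(if G.Adj v x then (1:ℝ) else 0) := by
    intro x hx
    have hne : v ≠ x := fun h => hv (h ▸ hx)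
    rw [stmt16_lap_offdiag G hne]
    split_ifs <;> ring
  rw [Finset.sum_congr rfl hoff, Finset.sum_neg_distrib, neg_neg, Finset.sum_boole]

lemma stmt16_traceLP {D : Finset (Fin n)} (hmn : D.card < n) (k : ℕ)
    (hdom : ∀ v : Fin n, v ∉ D → k ≤ (D.filter (fun u => G.Adj v u)).card) :
    (∑ u ∈ D, (G.degree u : ℝ)) + (k : ℝ) ≤ (G.lapMatrix ℝ * stmt16P n D).trace := by
  set r : ℝ := ((n : ℝ) - D.card)⁻¹ with hrdef
  have hr0 : 0 < r := inv_pos.mpr (stmt16_sub_pos hmn)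
  have hdiag : ∀ v : Fin n, v ∈ D → (G.lapMatrix ℝ * stmt16P n D) v v = G.degree v := by
    intro v hv
    rw [Matrix.mul_apply]
    have hPv : ∀ x : Fin n, stmt16P n D x v = if x = v then 1 else 0 := by
      intro x
      by_cases hx : x ∈ D
      · rw [stmt16P_memD hx]
      · rw [stmt16P_notMemD hx, if_pos hv, if_neg (show x ≠ v by rintro rfl; exact hx hv)]
    rw [Finset.sum_congr rfl fun x _ => by rw [hPv x]]
    simp [mul_ite, Finset.sum_ite_eq', stmt16_lap_diag G v]
  have hoffd : ∀ v : Fin n, v ∉ D →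
      (G.lapMatrix ℝ * stmt16P n D) v v
        = ((D.filter (fun u => G.Adj v u)).card : ℝ) * r := by
    intro v hv
    rw [Matrix.mul_apply]
    have hPv : ∀ x : Fin n, stmt16P n D x v = if x ∈ D then 0 else r := by
      intro x
      by_cases hx : x ∈ D
      · rw [stmt16P_memD hx, if_pos hx,
          if_neg (show x ≠ v by rintro rfl; exact hv hx)]
      · rw [stmt16P_notMemD hx, if_neg hv, if_neg hx]
    calc ∑ x, (G.lapMatrix ℝ) v x * stmt16P n D x v
        = ∑ x : Fin n, (if x ∈ D then (0:ℝ) else (G.lapMatrix ℝ) v x) * r := by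
          refine Finset.sum_congr rfl fun x _ => ?_
          rw [hPv x]
          split_ifs <;> ring
      _ = ((D.filter (fun u => G.Adj v u)).card : ℝ) * r := by
          rw [← Finset.sum_mul, stmt16_inner_sum G hv]
  rw [Matrix.trace]
  simp only [Matrix.diag]
  rw [← Finset.sum_filter_add_sum_filter_not Finset.univ (· ∈ D)
      (fun v => (G.lapMatrix ℝ * stmt16P n D) v v)]
  have h1 : Finset.univ.filter (fun v : Fin n => v ∈ D) = D := by
    rw [Finset.filter_mem_eq_inter, Finset.univ_inter]
  have h2 : ∑ v ∈ Finset.univ.filter (fun v : Fin n => v ∈ D),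
      (G.lapMatrix ℝ * stmt16P n D) v v = ∑ u ∈ D, (G.degree u : ℝ) := by
    rw [h1]
    exact Finset.sum_congr rfl fun v hv => hdiag v hv
  rw [h2]
  have h3 : (k : ℝ) ≤ ∑ v ∈ Finset.univ.filter (fun v : Fin n => ¬ v ∈ D),
      (G.lapMatrix ℝ * stmt16P n D) v v := by
    have hstep : ∀ v ∈ Finset.univ.filter (fun v : Fin n => ¬ v ∈ D),
        (k : ℝ) * r ≤ (G.lapMatrix ℝ * stmt16P n D) v v := by
      intro v hv
      rw [Finset.mem_filter] at hv
      rw [hoffd v hv.2]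
      have := hdom v hv.2
      have hcast : (k : ℝ) ≤ ((D.filter (fun u => G.Adj v u)).card : ℝ) := by
        exact_mod_cast this
      exact mul_le_mul_of_nonneg_right hcast hr0.le
    have hne : (n : ℝ) - D.card ≠ 0 := ne_of_gt (stmt16_sub_pos hmn)
    calc (k : ℝ) = ((n : ℝ) - D.card) * ((n : ℝ) - D.card)⁻¹ * k := by
          rw [mul_inv_cancel₀ hne, one_mul]
      _ = ((n : ℝ) - D.card) * ((k : ℝ) * r) := by rw [hrdef]; ring
      _ = ∑ _v ∈ Finset.univ.filter (fun v : Fin n => ¬ v ∈ D), ((k : ℝ) * r) := by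
          rw [Finset.sum_const, nsmul_eq_mul, stmt16_compl_card_real hmn]
      _ ≤ _ := Finset.sum_le_sum hstep
  linarith
/-- If `D` is a `k`-dominating set of size `m` in a connected graph, then
`∑_{i≤m} λᵢ ≥ ∑_{u∈D} d_u + k`. -/
theorem stmt16 (n : ℕ) (G : SimpleGraph (Fin n)) [DecidableRel G.Adj]
    (hconn : G.Connected)
    (hL : (G.lapMatrix ℝ).IsHermitian)
    (lam : Fin n → ℝ) (σ : Equiv.Perm (Fin n))
    (hlam : lam = hL.eigenvalues ∘ σ)
    (hlamAnti : ∀ i j : Fin n, i ≤ j → lam j ≤ lam i)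
    (k : ℕ) (D : Finset (Fin n)) (m : ℕ) (hD : D.card = m)
    (hm0 : 0 < m) (hmn : m < n)
    (hdom : ∀ v : Fin n, v ∉ D → k ≤ (D.filter (fun u => G.Adj v u)).card) :
    (∑ u ∈ D, (G.degree u : ℝ)) + (k : ℝ) ≤
      ∑ i ∈ Finset.filter (fun i : Fin n => (i : ℕ) < m) Finset.univ, lam i := by
  subst hD
  have hn0 : 0 < n := Nat.lt_trans hm0 hmn
  set R := stmt16P n D - stmt16Q n with hR
  have hsym : star R = R := by
    rw [hR, star_sub, stmt16P_sym, stmt16Q_sym]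
  have hidem : R * R = R := by
    rw [hR, sub_mul, mul_sub, mul_sub, stmt16P_idem hmn, stmt16_PQ hmn, stmt16_QP hmn,
      stmt16_QQ hn0]
    abel
  have htr : R.trace = (D.card : ℝ) := by
    rw [hR, Matrix.trace_sub, stmt16P_trace hmn, stmt16Q_trace hn0]
    ring
  have h1 : (∑ u ∈ D, (G.degree u : ℝ)) + (k : ℝ) ≤ (G.lapMatrix ℝ * R).trace := by
    have heq : (G.lapMatrix ℝ * R).trace = (G.lapMatrix ℝ * stmt16P n D).trace := by
      rw [hR, mul_sub, Matrix.trace_sub, stmt16_traceLQ G hn0, sub_zero]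
    rw [heq]
    exact stmt16_traceLP G hmn k hdom
  exact le_trans h1
    (stmt16_kyfan (G.lapMatrix ℝ) hL R hsym hidem D.card htr hmn lam σ hlam hlamAnti)
end

section
/- Let G be a connected finite simple graph on n vertices with Laplacian eigenvalues λ₁ ≥ ⋯ ≥ λₙ and degrees d₁ ≥ ⋯ ≥ dₙ. Then the isoperimetric number satisfies i(G) ≤ min over n/2 ≤ m < n of ∑_{i=1}^{m}(λᵢ − dᵢ). -/
open Finset
open Matrix

lemma my_card_filter_ge {n m : ℕ} (hm : m < n) :
    (Finset.filter (fun i : Fin n => m ≤ (i:ℕ)) Finset.univ).card = n - m := by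
  have : Finset.filter (fun i : Fin n => m ≤ (i:ℕ)) Finset.univ = Finset.Ici (⟨m, hm⟩ : Fin n) := by
    ext i; simp [Fin.le_def]
  rw [this, Fin.card_Ici]

lemma my_fan_aux {n m : ℕ} (hm : m < n) (lam c : Fin n → ℝ)
    (hanti : ∀ i j : Fin n, i ≤ j → lam j ≤ lam i)
    (hc0 : ∀ i, 0 ≤ c i) (hc1 : ∀ i, c i ≤ 1)
    (hsum : ∑ i, c i = ((n - m : ℕ) : ℝ)) :
    ∑ i ∈ Finset.filter (fun i : Fin n => m ≤ (i:ℕ)) Finset.univ, lam i ≤ ∑ i, lam i * c i := by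
  classical
  set p : Fin n := ⟨m, hm⟩ with hp
  have hsplit : ∑ i ∈ Finset.filter (fun i : Fin n => m ≤ (i:ℕ)) Finset.univ, c i
      + ∑ i ∈ Finset.filter (fun i : Fin n => ¬ (m ≤ (i:ℕ))) Finset.univ, c i
      = ((n - m : ℕ) : ℝ) := by
    rw [Finset.sum_filter_add_sum_filter_not Finset.univ (fun i : Fin n => m ≤ (i:ℕ)) c, hsum]
  have hsplitlam : ∑ i, lam i * c i
      = ∑ i ∈ Finset.filter (fun i : Fin n => m ≤ (i:ℕ)) Finset.univ, lam i * c i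
      + ∑ i ∈ Finset.filter (fun i : Fin n => ¬ (m ≤ (i:ℕ))) Finset.univ, lam i * c i :=
    (Finset.sum_filter_add_sum_filter_not Finset.univ _ _).symm
  have hcard : (Finset.filter (fun i : Fin n => m ≤ (i:ℕ)) Finset.univ).card = n - m :=
    my_card_filter_ge hm
  -- bound on the ≥ m part
  have h1 : ∑ i ∈ Finset.filter (fun i : Fin n => m ≤ (i:ℕ)) Finset.univ,
      (lam i + lam p * (c i - 1))
      ≤ ∑ i ∈ Finset.filter (fun i : Fin n => m ≤ (i:ℕ)) Finset.univ, lam i * c i := by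
    apply Finset.sum_le_sum
    intro i hi
    have hip : p ≤ i := by
      simp only [Finset.mem_filter] at hi
      exact hi.2
    have hli : lam i ≤ lam p := hanti p i hip
    have h1c : 0 ≤ 1 - c i := by linarith [hc1 i]
    nlinarith [mul_le_mul_of_nonneg_right hli h1c]
  have h2 : ∑ i ∈ Finset.filter (fun i : Fin n => ¬ (m ≤ (i:ℕ))) Finset.univ, lam p * c i
      ≤ ∑ i ∈ Finset.filter (fun i : Fin n => ¬ (m ≤ (i:ℕ))) Finset.univ, lam i * c i := by
    apply Finset.sum_le_sum
    intro i hi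
    have hip : i ≤ p := by
      simp only [Finset.mem_filter, not_le] at hi
      exact le_of_lt hi.2
    exact mul_le_mul_of_nonneg_right (hanti i p hip) (hc0 i)
  have e1 : ∑ i ∈ Finset.filter (fun i : Fin n => m ≤ (i:ℕ)) Finset.univ,
      (lam i + lam p * (c i - 1))
      = ∑ i ∈ Finset.filter (fun i : Fin n => m ≤ (i:ℕ)) Finset.univ, lam i
      + lam p * ((∑ i ∈ Finset.filter (fun i : Fin n => m ≤ (i:ℕ)) Finset.univ, c i)
          - ((n - m : ℕ) : ℝ)) := by
    rw [Finset.sum_add_distrib, ← Finset.mul_sum, Finset.sum_sub_distrib, Finset.sum_const,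
      hcard]
    simp [mul_sub]
  have e2 : ∑ i ∈ Finset.filter (fun i : Fin n => ¬ (m ≤ (i:ℕ))) Finset.univ, lam p * c i
      = lam p * ∑ i ∈ Finset.filter (fun i : Fin n => ¬ (m ≤ (i:ℕ))) Finset.univ, c i := by
    rw [Finset.mul_sum]
  have e3 : lam p * ((∑ i ∈ Finset.filter (fun i : Fin n => m ≤ (i:ℕ)) Finset.univ, c i)
      - ((n - m : ℕ) : ℝ))
      = - (lam p * ∑ i ∈ Finset.filter (fun i : Fin n => ¬ (m ≤ (i:ℕ))) Finset.univ, c i) := by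
    have e4 : (∑ i ∈ Finset.filter (fun i : Fin n => m ≤ (i:ℕ)) Finset.univ, c i)
        - ((n - m : ℕ) : ℝ)
        = - ∑ i ∈ Finset.filter (fun i : Fin n => ¬ (m ≤ (i:ℕ))) Finset.univ, c i := by
      linarith
    rw [e4, mul_neg]
  linarith [h1, h2, e1, e2, e3, hsplitlam]


lemma my_qf_bounds {n k : ℕ} (C : Finset (Fin n)) (hC : C.card = k) (hk : 0 < k)
    (hkn : k < n) (v : Fin n → ℝ) :
    0 ≤ (n:ℝ)⁻¹ * (∑ j, v j)^2 + ∑ j ∈ C, (v j)^2 - (k:ℝ)⁻¹ * (∑ j ∈ C, v j)^2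
    ∧ (n:ℝ)⁻¹ * (∑ j, v j)^2 + ∑ j ∈ C, (v j)^2 - (k:ℝ)⁻¹ * (∑ j ∈ C, v j)^2
      ≤ ∑ j, (v j)^2 := by
  classical
  have hk0 : (0:ℝ) < (k:ℝ) := by exact_mod_cast hk
  have hn0 : (0:ℝ) < (n:ℝ) := by exact_mod_cast (hk.trans hkn)
  have hM0 : (0:ℝ) < ((n - k : ℕ) : ℝ) := by
    have : 0 < n - k := Nat.sub_pos_of_lt hkn
    exact_mod_cast this
  have hnkM : (n:ℝ) = (k:ℝ) + ((n - k : ℕ) : ℝ) := by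
    rw [Nat.cast_sub (le_of_lt hkn)]; ring
  have hCS1 : (∑ j ∈ C, v j)^2 ≤ (k:ℝ) * ∑ j ∈ C, (v j)^2 := by
    have := sq_sum_le_card_mul_sum_sq (s := C) (f := v)
    rwa [hC] at this
  have hCS2 : (∑ j ∈ Cᶜ, v j)^2 ≤ ((n - k : ℕ):ℝ) * ∑ j ∈ Cᶜ, (v j)^2 := by
    have hcc : Cᶜ.card = n - k := by
      rw [Finset.card_compl, hC]; simp
    have := sq_sum_le_card_mul_sum_sq (s := Cᶜ) (f := v)
    rwa [hcc] at this
  have hsplit : ∑ j ∈ C, v j + ∑ j ∈ Cᶜ, v j = ∑ j, v j := Finset.sum_add_sum_compl C v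
  have hsplit2 : ∑ j ∈ C, (v j)^2 + ∑ j ∈ Cᶜ, (v j)^2 = ∑ j, (v j)^2 :=
    Finset.sum_add_sum_compl C _
  have hsqC : (0:ℝ) ≤ ∑ j ∈ Cᶜ, (v j)^2 := Finset.sum_nonneg fun j _ => sq_nonneg _
  have h1 : (k:ℝ)⁻¹ * (∑ j ∈ C, v j)^2 ≤ ∑ j ∈ C, (v j)^2 := by
    rw [inv_mul_eq_div, div_le_iff₀ hk0]
    linarith [hCS1]
  constructor
  · have h0 : 0 ≤ (n:ℝ)⁻¹ * (∑ j, v j)^2 := by positivity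
    linarith
  · set a := ∑ j ∈ C, v j
    set b := ∑ j ∈ Cᶜ, v j
    set M := ((n - k : ℕ):ℝ)
    rw [← hsplit, ← hsplit2]
    have key : (0:ℝ) ≤ (M * a - (k:ℝ) * b)^2 := sq_nonneg _
    have h2 : (n:ℝ)⁻¹ * (a + b)^2 ≤ (k:ℝ)⁻¹ * a^2 + M⁻¹ * b^2 := by
      have e : (k:ℝ)⁻¹ * a^2 + M⁻¹ * b^2 = (M * a^2 + (k:ℝ) * b^2) / ((k:ℝ) * M) := by
        field_simp
      rw [e, inv_mul_eq_div, div_le_div_iff₀ hn0 (by positivity)]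
      rw [hnkM]
      nlinarith [key]
    have h3 : M⁻¹ * b^2 ≤ ∑ j ∈ Cᶜ, (v j)^2 := by
      rw [inv_mul_eq_div, div_le_iff₀ hM0]
      linarith [hCS2]
    linarith [h2, h3]



noncomputable def myP (n k : ℕ) (C : Finset (Fin n)) : Matrix (Fin n) (Fin n) ℝ :=
  Matrix.of fun i j => (n:ℝ)⁻¹ + (if i = j ∧ i ∈ C then (1:ℝ) else 0)
    - (k:ℝ)⁻¹ * (if i ∈ C ∧ j ∈ C then (1:ℝ) else 0)

lemma myP_qf {n k : ℕ} (C : Finset (Fin n)) (v : Fin n → ℝ) :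
    v ⬝ᵥ (myP n k C *ᵥ v) = (n:ℝ)⁻¹ * (∑ j, v j)^2 + ∑ j ∈ C, (v j)^2
      - (k:ℝ)⁻¹ * (∑ j ∈ C, v j)^2 := by
  classical
  have step1 : v ⬝ᵥ (myP n k C *ᵥ v)
      = ∑ i, ∑ j, ((n:ℝ)⁻¹ * (v i * v j) + (if i = j ∧ i ∈ C then v i * v j else 0)
          - (k:ℝ)⁻¹ * (if i ∈ C ∧ j ∈ C then v i * v j else 0)) := by
    simp only [dotProduct, Matrix.mulVec, myP, Matrix.of_apply, Finset.mul_sum]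
    refine Finset.sum_congr rfl fun i _ => Finset.sum_congr rfl fun j _ => ?_
    by_cases h1 : i = j <;> by_cases h2 : i ∈ C <;> by_cases h3 : j ∈ C <;>
      simp [h1, h2, h3] <;> ring
  rw [step1]
  have e1 : ∑ i : Fin n, ∑ j : Fin n, (n:ℝ)⁻¹ * (v i * v j) = (n:ℝ)⁻¹ * (∑ j, v j)^2 := by
    have h : ∑ i : Fin n, ∑ j : Fin n, (n:ℝ)⁻¹ * (v i * v j)
        = (n:ℝ)⁻¹ * ∑ i : Fin n, ∑ j : Fin n, v i * v j := by
      rw [Finset.mul_sum]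
      exact Finset.sum_congr rfl fun i _ => by rw [Finset.mul_sum]
    rw [h]
    congr 1
    rw [sq, Finset.sum_mul_sum]
  have e2 : ∀ i : Fin n, ∑ j, (if i = j ∧ i ∈ C then v i * v j else 0)
      = (if i ∈ C then (v i)^2 else 0) := by
    intro i
    by_cases h2 : i ∈ C
    · simp only [h2, and_true, if_true]
      rw [Finset.sum_ite_eq Finset.univ i (fun j => v i * v j)]
      simp [sq]
    · simp [h2]
  have e3 : ∀ i : Fin n, ∑ j, (if i ∈ C ∧ j ∈ C then v i * v j else 0)
      = (if i ∈ C then v i * ∑ j ∈ C, v j else 0) := by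
    intro i
    by_cases h2 : i ∈ C
    · simp only [h2, true_and, if_true]
      rw [Finset.sum_ite_mem]
      simp only [Finset.univ_inter]
      exact (Finset.mul_sum _ _ _).symm
    · simp [h2]
  have e4 : ∑ i : Fin n, ∑ j : Fin n, (k:ℝ)⁻¹ * (if i ∈ C ∧ j ∈ C then v i * v j else 0)
      = (k:ℝ)⁻¹ * (∑ j ∈ C, v j)^2 := by
    have h : ∑ i : Fin n, ∑ j : Fin n, (k:ℝ)⁻¹ * (if i ∈ C ∧ j ∈ C then v i * v j else 0)
        = (k:ℝ)⁻¹ * ∑ i : Fin n, ∑ j : Fin n, (if i ∈ C ∧ j ∈ C then v i * v j else 0) := by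
      rw [Finset.mul_sum]
      exact Finset.sum_congr rfl fun i _ => by rw [Finset.mul_sum]
    rw [h]
    congr 1
    rw [Finset.sum_congr rfl fun i _ => e3 i, Finset.sum_ite_mem]
    simp only [Finset.univ_inter]
    rw [← Finset.sum_mul, sq]
  simp only [Finset.sum_add_distrib, Finset.sum_sub_distrib]
  rw [e1, e4, Finset.sum_congr rfl fun i _ => e2 i, Finset.sum_ite_mem]
  simp only [Finset.univ_inter]

lemma myP_trace {n k : ℕ} (C : Finset (Fin n)) (hC : C.card = k) (hn : 0 < n) (hk : 0 < k) :
    Matrix.trace (myP n k C) = (k:ℝ) := by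
  classical
  have hn0 : (n:ℝ) ≠ 0 := Nat.cast_ne_zero.mpr hn.ne'
  have hk0 : (k:ℝ) ≠ 0 := Nat.cast_ne_zero.mpr hk.ne'
  have hsum : ∑ i : Fin n, (if i ∈ C then (1:ℝ) else 0) = (k:ℝ) := by
    rw [Finset.sum_ite_mem]
    simp [hC]
  simp only [Matrix.trace, Matrix.diag, myP, Matrix.of_apply, and_self, true_and]
  rw [Finset.sum_sub_distrib, Finset.sum_add_distrib, hsum, ← Finset.mul_sum, hsum]
  simp only [Finset.sum_const, Finset.card_univ, Fintype.card_fin, nsmul_eq_mul]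
  field_simp
  ring

lemma lap_trace_mul {n k : ℕ} (G : SimpleGraph (Fin n)) [DecidableRel G.Adj]
    (C : Finset (Fin n)) :
    Matrix.trace (G.lapMatrix ℝ * myP n k C)
      = ∑ i ∈ C, (G.degree i : ℝ) - (k:ℝ)⁻¹ * ∑ i ∈ C, ∑ j ∈ C, G.lapMatrix ℝ i j := by
  classical
  have htr : Matrix.trace (G.lapMatrix ℝ * myP n k C)
      = ∑ i, ∑ j, G.lapMatrix ℝ i j * myP n k C j i := by
    simp [Matrix.trace, Matrix.diag, Matrix.mul_apply]
  rw [htr]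
  have expand : ∀ i j : Fin n, G.lapMatrix ℝ i j * myP n k C j i
      = (n:ℝ)⁻¹ * G.lapMatrix ℝ i j + (if j = i ∧ j ∈ C then G.lapMatrix ℝ i j else 0)
        - (k:ℝ)⁻¹ * (if i ∈ C ∧ j ∈ C then G.lapMatrix ℝ i j else 0) := by
    intro i j
    by_cases h1 : j = i <;> by_cases h2 : i ∈ C <;> by_cases h3 : j ∈ C <;>
      simp [myP, h1, h2, h3] <;> first | ring | (exfalso; exact h3 (h1 ▸ h2)) | skip
  rw [Finset.sum_congr rfl fun i _ => Finset.sum_congr rfl fun j _ => expand i j]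
  simp only [Finset.sum_add_distrib, Finset.sum_sub_distrib]
  have hrow : ∀ i : Fin n, ∑ j, G.lapMatrix ℝ i j = 0 := by
    intro i
    have := congrFun (G.lapMatrix_mulVec_const_eq_zero (R := ℝ)) i
    simpa [Matrix.mulVec, dotProduct] using this
  have t1 : ∑ i : Fin n, ∑ j : Fin n, (n:ℝ)⁻¹ * G.lapMatrix ℝ i j = 0 := by
    rw [Finset.sum_congr rfl fun i (_ : i ∈ Finset.univ) => by
      rw [← Finset.mul_sum, hrow i, mul_zero]]
    exact Finset.sum_const_zero
  have t2 : ∑ i : Fin n, ∑ j : Fin n, (if j = i ∧ j ∈ C then G.lapMatrix ℝ i j else 0)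
      = ∑ i ∈ C, (G.degree i : ℝ) := by
    have hdiag : ∀ i : Fin n, G.lapMatrix ℝ i i = (G.degree i : ℝ) := by
      intro i
      simp [SimpleGraph.lapMatrix, SimpleGraph.degMatrix, Matrix.diagonal]
    have inner : ∀ i : Fin n, ∑ j : Fin n, (if j = i ∧ j ∈ C then G.lapMatrix ℝ i j else 0)
        = (if i ∈ C then (G.degree i:ℝ) else 0) := by
      intro i
      have h : ∀ j : Fin n, (if j = i ∧ j ∈ C then G.lapMatrix ℝ i j else 0)
          = (if j = i then (if i ∈ C then (G.degree i:ℝ) else 0) else 0) := by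
        intro j
        by_cases h1 : j = i
        · subst h1
          by_cases h2 : j ∈ C <;> simp [h2, hdiag j]
        · simp [h1]
      rw [Finset.sum_congr rfl fun j _ => h j, Finset.sum_ite_eq' Finset.univ i]
      simp
    rw [Finset.sum_congr rfl fun i _ => inner i, Finset.sum_ite_mem]
    simp
  have t3 : ∑ i : Fin n, ∑ j : Fin n, (k:ℝ)⁻¹ * (if i ∈ C ∧ j ∈ C then G.lapMatrix ℝ i j else 0)
      = (k:ℝ)⁻¹ * ∑ i ∈ C, ∑ j ∈ C, G.lapMatrix ℝ i j := by
    have h : ∑ i : Fin n, ∑ j : Fin n, (k:ℝ)⁻¹ * (if i ∈ C ∧ j ∈ C then G.lapMatrix ℝ i j else 0)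
        = (k:ℝ)⁻¹ * ∑ i : Fin n, ∑ j : Fin n, (if i ∈ C ∧ j ∈ C then G.lapMatrix ℝ i j else 0) := by
      rw [Finset.mul_sum]
      exact Finset.sum_congr rfl fun i _ => by rw [Finset.mul_sum]
    rw [h]
    congr 1
    have inner : ∀ i : Fin n, ∑ j : Fin n, (if i ∈ C ∧ j ∈ C then G.lapMatrix ℝ i j else 0)
        = (if i ∈ C then ∑ j ∈ C, G.lapMatrix ℝ i j else 0) := by
      intro i
      by_cases h2 : i ∈ C
      · simp only [h2, true_and, if_true]
        rw [Finset.sum_ite_mem]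
        simp
      · simp [h2]
    rw [Finset.sum_congr rfl fun i _ => inner i, Finset.sum_ite_mem]
    simp
  rw [t1, t2, t3]
  ring

lemma boundary_eq {n : ℕ} (G : SimpleGraph (Fin n)) [DecidableRel G.Adj]
    (C : Finset (Fin n)) :
    ∑ i ∈ C, ∑ j ∈ C, G.lapMatrix ℝ i j = (edgeBoundary G C : ℝ) := by
  classical
  have hadj : ∀ i : Fin n, ∑ j, (if G.Adj i j then (1:ℝ) else 0) = (G.degree i:ℝ) := by
    intro i
    have := SimpleGraph.adjMatrix_mulVec_const_apply (α := ℝ) (G := G) (a := 1) (v := i)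
    simp [Matrix.mulVec, dotProduct, SimpleGraph.adjMatrix] at this
    simpa using this
  have lhs_i : ∀ i ∈ C, ∑ j ∈ C, G.lapMatrix ℝ i j
      = (G.degree i:ℝ) - ∑ j ∈ C, (if G.Adj i j then (1:ℝ) else 0) := by
    intro i hi
    simp only [SimpleGraph.lapMatrix, Matrix.sub_apply, Finset.sum_sub_distrib]
    congr 1
    simp only [SimpleGraph.degMatrix, Matrix.diagonal, Matrix.of_apply]
    rw [Finset.sum_ite_eq C i]
    simp [hi]
  have rhs : (edgeBoundary G C : ℝ)
      = ∑ i ∈ C, ((G.degree i:ℝ) - ∑ j ∈ C, (if G.Adj i j then (1:ℝ) else 0)) := by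
    rw [edgeBoundary, Finset.card_filter]
    push_cast
    rw [Fintype.sum_prod_type]
    have h1 : ∀ i : Fin n, ∑ j : Fin n, (if i ∈ C ∧ j ∉ C ∧ G.Adj i j then (1:ℝ) else 0)
        = (if i ∈ C then ∑ j : Fin n, (if j ∉ C ∧ G.Adj i j then (1:ℝ) else 0) else 0) := by
      intro i
      by_cases h : i ∈ C <;> simp [h]
    rw [Finset.sum_congr rfl fun i _ => h1 i, Finset.sum_ite_mem]
    simp only [Finset.univ_inter]
    refine Finset.sum_congr rfl fun i hi => ?_
    have h2 : ∀ j : Fin n, (if j ∉ C ∧ G.Adj i j then (1:ℝ) else 0)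
        = (if G.Adj i j then (1:ℝ) else 0)
          - (if j ∈ C then (if G.Adj i j then (1:ℝ) else 0) else 0) := by
      intro j
      by_cases hj : j ∈ C <;> by_cases ha : G.Adj i j <;> simp [hj, ha]
    rw [Finset.sum_congr rfl fun j _ => h2 j, Finset.sum_sub_distrib, hadj i,
      Finset.sum_ite_mem]
    simp
  rw [rhs]
  exact Finset.sum_congr rfl lhs_i


section spec
variable {n : ℕ} {A : Matrix (Fin n) (Fin n) ℝ}

lemma my_spec_real (hA : A.IsHermitian) :
    A = (hA.eigenvectorUnitary : Matrix (Fin n) (Fin n) ℝ) * Matrix.diagonal hA.eigenvalues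
      * star (hA.eigenvectorUnitary : Matrix (Fin n) (Fin n) ℝ) := by
  simpa [RCLike.ofReal_real_eq_id] using hA.spectral_theorem

lemma my_trace_mul_P (hA : A.IsHermitian) (P : Matrix (Fin n) (Fin n) ℝ) :
    Matrix.trace (A * P) = ∑ i, hA.eigenvalues i *
      ((star (hA.eigenvectorUnitary : Matrix (Fin n) (Fin n) ℝ) * P *
        (hA.eigenvectorUnitary : Matrix (Fin n) (Fin n) ℝ)) i i) := by
  set V := (hA.eigenvectorUnitary : Matrix (Fin n) (Fin n) ℝ) with hV
  calc Matrix.trace (A * P)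
      = Matrix.trace (V * Matrix.diagonal hA.eigenvalues * star V * P) := by
        rw [← my_spec_real hA]
    _ = Matrix.trace (star V * P * V * Matrix.diagonal hA.eigenvalues) := by
        rw [Matrix.trace_mul_cycle, Matrix.trace_mul_cycle, ← Matrix.mul_assoc]
    _ = ∑ i, hA.eigenvalues i * ((star V * P * V) i i) := by
        simp [Matrix.trace, Matrix.diag, Matrix.mul_diagonal, mul_comm]

lemma my_sum_c (hA : A.IsHermitian) (P : Matrix (Fin n) (Fin n) ℝ) :
    ∑ i, ((star (hA.eigenvectorUnitary : Matrix (Fin n) (Fin n) ℝ) * P *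
        (hA.eigenvectorUnitary : Matrix (Fin n) (Fin n) ℝ)) i i) = Matrix.trace P := by
  set V := (hA.eigenvectorUnitary : Matrix (Fin n) (Fin n) ℝ) with hV
  have hVV' : V * star V = 1 := Matrix.mem_unitaryGroup_iff.mp hA.eigenvectorUnitary.2
  have : ∑ i, ((star V * P * V) i i) = Matrix.trace (star V * P * V) := by
    simp [Matrix.trace, Matrix.diag]
  rw [this, Matrix.trace_mul_comm, ← Matrix.mul_assoc, hVV', one_mul]

lemma my_trace_eq_sum_eigen (hA : A.IsHermitian) :
    Matrix.trace A = ∑ i, hA.eigenvalues i := by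
  set V := (hA.eigenvectorUnitary : Matrix (Fin n) (Fin n) ℝ) with hV
  have hVV : star V * V = 1 := Matrix.mem_unitaryGroup_iff'.mp hA.eigenvectorUnitary.2
  calc Matrix.trace A
      = Matrix.trace (V * Matrix.diagonal hA.eigenvalues * star V) := by
        rw [← my_spec_real hA]
    _ = Matrix.trace (star V * V * Matrix.diagonal hA.eigenvalues) := by
        rw [Matrix.trace_mul_cycle]
    _ = ∑ i, hA.eigenvalues i := by
        rw [hVV, one_mul]
        simp [Matrix.trace, Matrix.diag, Matrix.diagonal]

lemma my_c_as_qf (V P : Matrix (Fin n) (Fin n) ℝ) (i : Fin n) :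
    (star V * P * V) i i = (fun l => V l i) ⬝ᵥ (P *ᵥ (fun l => V l i)) := by
  simp only [Matrix.mul_apply, dotProduct, Matrix.mulVec, Matrix.star_apply,
    star_trivial, Finset.sum_mul, Finset.mul_sum]
  rw [Finset.sum_comm]
  exact Finset.sum_congr rfl fun l _ => Finset.sum_congr rfl fun j _ => by ring

lemma my_col_norm (hA : A.IsHermitian) (i : Fin n) :
    ∑ l, ((hA.eigenvectorUnitary : Matrix (Fin n) (Fin n) ℝ) l i)^2 = 1 := by
  set V := (hA.eigenvectorUnitary : Matrix (Fin n) (Fin n) ℝ) with hV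
  have hVV : star V * V = 1 := Matrix.mem_unitaryGroup_iff'.mp hA.eigenvectorUnitary.2
  have := congrFun (congrFun hVV i) i
  simp only [Matrix.mul_apply, Matrix.star_apply, star_trivial, Matrix.one_apply_eq] at this
  rw [← this]
  exact Finset.sum_congr rfl fun l _ => by ring

end spec

/-- The isoperimetric number `i(G) = min { |∂(U,Ū)|/|U| : 0 < |U| ≤ n/2 }`
satisfies `i(G) ≤ ∑_{i≤m} (λᵢ - dᵢ)` for every `m` with `n/2 ≤ m < n`. -/
theorem stmt17 (n : ℕ) (G : SimpleGraph (Fin n)) [DecidableRel G.Adj]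
    (hconn : G.Connected)
    (hL : (G.lapMatrix ℝ).IsHermitian)
    (lam : Fin n → ℝ) (σ : Equiv.Perm (Fin n))
    (hlam : lam = hL.eigenvalues ∘ σ)
    (hlamAnti : ∀ i j : Fin n, i ≤ j → lam j ≤ lam i)
    (d : Fin n → ℝ) (τ : Equiv.Perm (Fin n))
    (hd : d = (fun v => (G.degree v : ℝ)) ∘ τ)
    (hdAnti : ∀ i j : Fin n, i ≤ j → d j ≤ d i)
    (iG : ℝ)
    (hiG : IsLeast {x : ℝ | ∃ U : Finset (Fin n), 0 < U.card ∧ 2 * U.card ≤ n ∧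
      x = (edgeBoundary G U : ℝ) / (U.card : ℝ)} iG) :
    ∀ m : ℕ, n ≤ 2 * m → m < n →
      iG ≤ ∑ i ∈ Finset.filter (fun i : Fin n => (i : ℕ) < m) Finset.univ,
        (lam i - d i) := by
  intro m hn2m hmn
  classical
  have hm0 : 0 < m := by omega
  have hn0 : 0 < n := by omega
  have hk0 : 0 < n - m := by omega
  have hkn : n - m < n := by omega
  set Fge := Finset.filter (fun i : Fin n => m ≤ (i:ℕ)) Finset.univ with hFge
  have hFgecard : Fge.card = n - m := my_card_filter_ge hmn
  set C := Fge.image τ with hCdef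
  have hCcard : C.card = n - m := by
    rw [hCdef, Finset.card_image_of_injective _ τ.injective, hFgecard]
  set μ := hL.eigenvalues with hmu
  set V := (hL.eigenvectorUnitary : Matrix (Fin n) (Fin n) ℝ) with hV
  set P := myP n (n - m) C with hPdef
  set c : Fin n → ℝ := fun i => (star V * P * V) i i with hc
  have hc0 : ∀ i, 0 ≤ c i := by
    intro i
    show (0:ℝ) ≤ (star V * P * V) i i
    rw [my_c_as_qf V P i, hPdef, myP_qf]
    exact (my_qf_bounds C hCcard hk0 hkn (fun l => V l i)).1
  have hc1 : ∀ i, c i ≤ 1 := by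
    intro i
    show (star V * P * V) i i ≤ 1
    rw [my_c_as_qf V P i, hPdef, myP_qf]
    have h2 := (my_qf_bounds C hCcard hk0 hkn (fun l => V l i)).2
    have h3 : ∑ l, (V l i)^2 = 1 := my_col_norm hL i
    calc _ ≤ ∑ j, ((fun l => V l i) j)^2 := h2
      _ = 1 := h3
  have hcsum : ∑ i, c i = ((n - m : ℕ) : ℝ) := by
    show ∑ i, (star V * P * V) i i = ((n - m : ℕ) : ℝ)
    exact (my_sum_c hL P).trans (by rw [hPdef]; exact myP_trace C hCcard hn0 hk0)
  have hfan : ∑ i ∈ Fge, lam i ≤ ∑ i, lam i * c (σ i) := by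
    rw [hFge]
    exact my_fan_aux hmn lam (fun i => c (σ i)) hlamAnti (fun i => hc0 (σ i))
      (fun i => hc1 (σ i)) (by rw [show ∑ i, c (σ i) = ∑ i, c i from Equiv.sum_comp σ c]; exact hcsum)
  have hfan2 : ∑ i, lam i * c (σ i) = ∑ i, μ i * c i := by
    rw [hlam]
    exact Equiv.sum_comp σ (fun j => μ j * c j)
  have htrace1 : ∑ i, μ i * c i = Matrix.trace (G.lapMatrix ℝ * P) :=
    (my_trace_mul_P hL P).symm
  have htrace2 : Matrix.trace (G.lapMatrix ℝ * P)
      = ∑ i ∈ C, (G.degree i : ℝ) - ((n - m : ℕ):ℝ)⁻¹ * (edgeBoundary G C : ℝ) := by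
    rw [hPdef, lap_trace_mul, boundary_eq]
  have hdsum : ∑ i ∈ Fge, d i = ∑ v ∈ C, (G.degree v : ℝ) := by
    rw [hd, hCdef, Finset.sum_image (fun x _ y _ h => τ.injective h)]
    rfl
  have htot1 : ∑ i, lam i = ∑ i, μ i := by
    rw [hlam]; exact Equiv.sum_comp σ μ
  have htot2 : ∑ i, d i = ∑ v, (G.degree v : ℝ) := by
    rw [hd]; exact Equiv.sum_comp τ (fun v => (G.degree v : ℝ))
  have htot3 : ∑ i, μ i = ∑ v, (G.degree v : ℝ) := by
    rw [← my_trace_eq_sum_eigen hL]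
    simp [Matrix.trace, Matrix.diag, SimpleGraph.lapMatrix, SimpleGraph.degMatrix,
      Matrix.diagonal, Matrix.sub_apply]
  have hiGle : iG ≤ ((n - m : ℕ):ℝ)⁻¹ * (edgeBoundary G C : ℝ) := by
    have hmm := hiG.2 ⟨C, by rw [hCcard]; omega, by rw [hCcard]; omega, rfl⟩
    rwa [hCcard, div_eq_inv_mul] at hmm
  have hfilter_eq : Finset.filter (fun i : Fin n => (i:ℕ) < m) Finset.univ
      = Finset.filter (fun i : Fin n => ¬ (m ≤ (i:ℕ))) Finset.univ := by
    ext i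
    simp [not_le]
  have hsplitlam : ∑ i ∈ Finset.filter (fun i : Fin n => (i:ℕ) < m) Finset.univ, lam i
      + ∑ i ∈ Fge, lam i = ∑ i, lam i := by
    rw [hfilter_eq, hFge, add_comm]
    exact Finset.sum_filter_add_sum_filter_not Finset.univ (fun i : Fin n => m ≤ (i:ℕ)) lam
  have hsplitd : ∑ i ∈ Finset.filter (fun i : Fin n => (i:ℕ) < m) Finset.univ, d i
      + ∑ i ∈ Fge, d i = ∑ i, d i := by
    rw [hfilter_eq, hFge, add_comm]
    exact Finset.sum_filter_add_sum_filter_not Finset.univ (fun i : Fin n => m ≤ (i:ℕ)) d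
  have hkey : ∑ i ∈ Fge, lam i
      ≤ ∑ v ∈ C, (G.degree v : ℝ) - ((n - m : ℕ):ℝ)⁻¹ * (edgeBoundary G C : ℝ) := by
    calc ∑ i ∈ Fge, lam i ≤ ∑ i, lam i * c (σ i) := hfan
      _ = ∑ i, μ i * c i := hfan2
      _ = Matrix.trace (G.lapMatrix ℝ * P) := htrace1
      _ = _ := htrace2
  rw [Finset.sum_sub_distrib]
  linarith [hkey, hdsum, htot1, htot2, htot3, hiGle, hsplitlam, hsplitd]
end
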